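/- Let V, V' be vector spaces and define morphisms 𝕍 → 𝕍' as pairs (Φ, ω) with Φ: V → V' linear and ω ∈ ∧²V*, where w = v⊕α is related to w' = v'⊕α' iff v' = Φ(v) and Φ*α' = α + ι(v)ω. Then these morphisms are isometric: if w₁ ~ w₁' and w₂ ~ w₂', then ⟨w₁, w₂⟩ = ⟨w₁', w₂'⟩. Equivalently, the graph Γ_{(Φ,ω)} = {(w', w) : w ~ w'} is a Lagrangian subspace of 𝕍' ⊕ 𝕍̄, where 𝕍̄ denotes 𝕍 with the opposite bilinear form. -/
import Mathlib


open Module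

/-- The relation `w ~_{(Φ,ω)} w'` defined by a morphism `(Φ, ω) : V ⊕ V* → V' ⊕ V'*`,
with the 2-form `ω` encoded as a skew-symmetric map `ωm : V → V*` (so `ι(v)ω = ωm v`):
`v' = Φ(v)` and `Φ*α' = α + ι(v)ω`. -/
def morphRel {K V V' : Type*} [Field K] [AddCommGroup V] [Module K V]
    [AddCommGroup V'] [Module K V']
    (Φ : V →ₗ[K] V') (ωm : V →ₗ[K] Module.Dual K V)
    (w : V × Module.Dual K V) (w' : V' × Module.Dual K V') : Prop :=
  Φ w.1 = w'.1 ∧ w'.2.comp Φ = w.2 + ωm w.1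

lemma skew_aux {K V : Type*} [Field K] [AddCommGroup V] [Module K V]
    (ωm : V →ₗ[K] Module.Dual K V) (halt : ∀ v, ωm v v = 0) (u v : V) :
    ωm u v + ωm v u = 0 := by
  have h := halt (u + v)
  simp only [map_add, LinearMap.add_apply] at h
  rw [halt u, halt v] at h
  linear_combination h

/-- morphisms `(Φ, ω)` are isometric: if `w₁ ~ w₁'` and `w₂ ~ w₂'` then
`⟨w₁, w₂⟩ = ⟨w₁', w₂'⟩`; equivalently the graph `Γ_{(Φ,ω)}` is a Lagrangian subspace of
`𝕍' ⊕ 𝕍̄` (with the pairing form on `𝕍'` minus the pairing form on `𝕍`). -/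
theorem pure_spinors_stmt7 {K V V' : Type*} [Field K] [CharZero K]
    [AddCommGroup V] [Module K V] [FiniteDimensional K V]
    [AddCommGroup V'] [Module K V'] [FiniteDimensional K V']
    (Φ : V →ₗ[K] V') (ωm : V →ₗ[K] Module.Dual K V) (halt : ∀ v, ωm v v = 0) :
    (∀ (w₁ w₂ : V × Module.Dual K V) (w₁' w₂' : V' × Module.Dual K V'),
      morphRel Φ ωm w₁ w₁' → morphRel Φ ωm w₂ w₂' →
      w₁'.2 w₂'.1 + w₂'.2 w₁'.1 = w₁.2 w₂.1 + w₂.2 w₁.1) ∧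
    (∀ z : (V' × Module.Dual K V') × (V × Module.Dual K V),
      (∀ z' : (V' × Module.Dual K V') × (V × Module.Dual K V), morphRel Φ ωm z'.2 z'.1 →
        (z.1.2 z'.1.1 + z'.1.2 z.1.1) - (z.2.2 z'.2.1 + z'.2.2 z.2.1) = 0) ↔
      morphRel Φ ωm z.2 z.1) := by
  have key : ∀ (w₁ w₂ : V × Module.Dual K V) (w₁' w₂' : V' × Module.Dual K V'),
      morphRel Φ ωm w₁ w₁' → morphRel Φ ωm w₂ w₂' →
      w₁'.2 w₂'.1 + w₂'.2 w₁'.1 = w₁.2 w₂.1 + w₂.2 w₁.1 := by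
    rintro ⟨v₁, α₁⟩ ⟨v₂, α₂⟩ ⟨v₁', α₁'⟩ ⟨v₂', α₂'⟩ ⟨h1, h2⟩ ⟨h3, h4⟩
    simp only at *
    have e1 : α₁' (Φ v₂) = α₁ v₂ + ωm v₁ v₂ := by
      have := congrArg (fun f => f v₂) h2; simpa using this
    have e2 : α₂' (Φ v₁) = α₂ v₁ + ωm v₂ v₁ := by
      have := congrArg (fun f => f v₁) h4; simpa using this
    rw [← h1, ← h3, e1, e2]
    have := skew_aux ωm halt v₁ v₂
    linear_combination this
  refine ⟨key, fun z => ⟨fun h => ?_, fun hz z' hz' => ?_⟩⟩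
  · obtain ⟨⟨v', α'⟩, v, α⟩ := z
    have hv : Φ v = v' := by
      have hsep : ∀ δ : Module.Dual K V', δ (v' - Φ v) = 0 := by
        intro δ
        have := h ((Φ 0, δ), (0, δ.comp Φ - ωm 0)) ⟨rfl, by ext u; simp⟩
        simp only [map_zero, map_sub, LinearMap.sub_apply, LinearMap.coe_comp,
          Function.comp_apply, LinearMap.zero_apply] at this ⊢
        linear_combination this
      have := (Module.forall_dual_apply_eq_zero_iff K (v' - Φ v)).mp hsep
      rw [sub_eq_zero] at this; exact this.symm
    refine ⟨hv, ?_⟩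
    ext u
    have := h ((Φ u, 0), (u, (0 : Module.Dual K V').comp Φ - ωm u)) ⟨rfl, by ext x; simp⟩
    simp only [LinearMap.zero_apply, LinearMap.sub_apply, LinearMap.coe_comp,
      Function.comp_apply, LinearMap.add_apply] at this ⊢
    have hsk := skew_aux ωm halt u v
    linear_combination this - hsk
  · have := key z.2 z'.2 z.1 z'.1 hz hz'
    linear_combination this
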